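/- Let π be a finite sequence of points x_0, x_1, ..., x_n in ℝ^d such that consecutive points have Euclidean distance at most 1, and such that any two non-consecutive points have Euclidean distance strictly greater than 1 (a 'geodesic' path in a unit-distance graph). Then for any point z ∈ ℝ^d, the number of points of π lying in the unit cube z + [-1/2, 1/2]^d is at most C_d := 2^{d+1} / vol(B(0,1/2)), where vol(B(0,1/2)) is the volume of the Euclidean ball of radius 1/2 in ℝ^d. -/

import Mathlib

open MeasureTheory ENNReal

/-- The closed unit cube centered at `z` in `ℝ^d`. -/
def unitCube {d : ℕ} (z : EuclideanSpace ℝ (Fin d)) : Set (EuclideanSpace ℝ (Fin d)) :=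
  {y | ∀ i, |y i - z i| ≤ 1 / 2}

/-- Coordinate differences are bounded by the Euclidean distance. -/
lemma coord_le_dist {d : ℕ} (x y : EuclideanSpace ℝ (Fin d)) (k : Fin d) :
    |x k - y k| ≤ dist x y := by
  rw [EuclideanSpace.dist_eq]
  have h1 : |x k - y k| = Real.sqrt (dist (x k) (y k) ^ 2) := by
    rw [Real.dist_eq, Real.sqrt_sq_eq_abs, abs_abs]
  rw [h1]
  apply Real.sqrt_le_sqrt
  exact Finset.single_le_sum (f := fun i => dist (x i) (y i) ^ 2)
    (fun i _ => sq_nonneg _) (Finset.mem_univ k)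

/-- If points of a finset are in the unit cube and pairwise at distance `> 1`,
then the number of points is bounded by `2^d / vol(B(0,1/2))` in `ℝ≥0∞` terms. -/
lemma finset_card_vol_le {d : ℕ} {ι : Type*} (T : Finset ι)
    (f : ι → EuclideanSpace ℝ (Fin d)) (z : EuclideanSpace ℝ (Fin d))
    (hcube : ∀ i ∈ T, f i ∈ unitCube z)
    (hfar : ∀ i ∈ T, ∀ j ∈ T, i ≠ j → 1 < dist (f i) (f j)) :
    (T.card : ℝ≥0∞) * volume (Metric.ball (0 : EuclideanSpace ℝ (Fin d)) (1 / 2))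
      ≤ 2 ^ d := by
  classical
  -- the big cube of side 2
  set C : Set (EuclideanSpace ℝ (Fin d)) := {y | ∀ k, |y k - z k| ≤ 1} with hC
  -- balls around the points are disjoint
  have hdisj : (T : Set ι).PairwiseDisjoint (fun i => Metric.ball (f i) (1 / 2)) := by
    intro i hi j hj hij
    apply Metric.ball_disjoint_ball
    have := hfar i hi j hj hij
    linarith
  -- balls are inside C
  have hsub : ∀ i ∈ T, Metric.ball (f i) (1 / 2) ⊆ C := by
    intro i hi y hy k
    have h1 := hcube i hi k
    have h2 : |y k - (f i) k| ≤ dist y (f i) := coord_le_dist y (f i) k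
    have h3 : dist y (f i) < 1 / 2 := Metric.mem_ball.mp hy
    have h4 : |y k - z k| ≤ |y k - (f i) k| + |(f i) k - z k| := abs_sub_le _ _ _
    simp only [Set.mem_setOf_eq]
    linarith
  -- volume of C is 2^d
  have hCvol : volume C = 2 ^ d := by
    have hpre : (@WithLp.ofLp 2 (Fin d → ℝ)) ⁻¹'
        (Set.univ.pi fun k : Fin d => Set.Icc (z k - 1) (z k + 1)) = C := by
      ext y
      simp only [Set.mem_preimage, Set.mem_pi, Set.mem_univ, forall_true_left, Set.mem_Icc,
        hC, Set.mem_setOf_eq]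
      constructor
      · intro h k
        have hk := h k
        rw [abs_le]
        exact ⟨by linarith [hk.1], by linarith [hk.2]⟩
      · intro h k
        have hk := abs_le.mp (h k)
        exact ⟨by linarith [hk.1], by linarith [hk.2]⟩
    have hmp := (PiLp.volume_preserving_ofLp (Fin d)).measure_preimage
      (s := Set.univ.pi fun k : Fin d => Set.Icc (z k - 1) (z k + 1))
      (MeasurableSet.univ_pi fun k => measurableSet_Icc).nullMeasurableSet
    rw [hpre] at hmp
    rw [hmp, volume_pi_pi]
    simp only [Real.volume_Icc]
    have h2 : ∀ k : Fin d, ENNReal.ofReal (z k + 1 - (z k - 1)) = 2 := by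
      intro k
      have : z k + 1 - (z k - 1) = 2 := by ring
      rw [this]
      norm_num
    rw [Finset.prod_congr rfl fun k _ => h2 k, Finset.prod_const]
    simp
  -- sum of ball volumes
  have hball : ∀ i : ι, volume (Metric.ball (f i) (1 / 2))
      = volume (Metric.ball (0 : EuclideanSpace ℝ (Fin d)) (1 / 2)) :=
    fun i => Measure.addHaar_ball_center volume (f i) (1 / 2)
  calc (T.card : ℝ≥0∞) * volume (Metric.ball (0 : EuclideanSpace ℝ (Fin d)) (1 / 2))
      = ∑ i ∈ T, volume (Metric.ball (f i) (1 / 2)) := by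
        rw [Finset.sum_congr rfl fun i _ => hball i, Finset.sum_const, nsmul_eq_mul]
    _ = volume (⋃ i ∈ T, Metric.ball (f i) (1 / 2)) := by
        rw [measure_biUnion_finset hdisj fun i _ => Metric.isOpen_ball.measurableSet]
    _ ≤ volume C := measure_mono (Set.iUnion₂_subset hsub)
    _ = 2 ^ d := hCvol

/-- If `π = x_0, …, x_n` is a path in `ℝ^d` whose consecutive points are at Euclidean
distance at most `1` and whose non-consecutive points are at distance strictly greater
than `1` (a geodesic in a unit-distance graph), then for every `z ∈ ℝ^d` the number of
points of `π` in the unit cube centered at `z` is at most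
`C_d = 2^(d+1) / vol(B(0, 1/2))`. -/
theorem geodesic_points_in_cube_le
    {d : ℕ} {n : ℕ} (π : Fin (n + 1) → EuclideanSpace ℝ (Fin d))
    (hstep : ∀ i : Fin n, dist (π i.castSucc) (π i.succ) ≤ 1)
    (hsep : ∀ i j : Fin (n + 1), (i : ℕ) + 2 ≤ (j : ℕ) → 1 < dist (π i) (π j))
    (z : EuclideanSpace ℝ (Fin d)) :
    ((Set.range π ∩ unitCube z).ncard : ℝ) ≤
      2 ^ (d + 1) / (volume (Metric.ball (0 : EuclideanSpace ℝ (Fin d)) (1 / 2))).toReal := by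
  classical
  set B := Metric.ball (0 : EuclideanSpace ℝ (Fin d)) (1 / 2) with hB
  have hvpos : 0 < volume B := Metric.measure_ball_pos volume 0 (by norm_num)
  have hvfin : volume B < ⊤ := measure_ball_lt_top
  have hVpos : 0 < (volume B).toReal := ENNReal.toReal_pos hvpos.ne' hvfin.ne
  -- the set of indices in the cube
  set S : Finset (Fin (n + 1)) := Finset.univ.filter (fun i => π i ∈ unitCube z) with hS
  -- the bound within each parity class
  have hparity : ∀ (P : ℕ → Prop) (_ : DecidablePred P),
      (∀ a b : ℕ, P a → P b → a < b → a + 2 ≤ b) →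
      ((S.filter fun i => P i.val).card : ℝ) ≤ 2 ^ d / (volume B).toReal := by
    intro P hP hgap
    set T := S.filter fun i => P i.val with hT
    have key : (T.card : ℝ≥0∞) * volume B ≤ 2 ^ d := by
      apply finset_card_vol_le T π z
      · intro i hi
        exact (Finset.mem_filter.mp (Finset.mem_filter.mp hi).1).2
      · intro i hi j hj hij
        have hPi : P i.val := (Finset.mem_filter.mp hi).2
        have hPj : P j.val := (Finset.mem_filter.mp hj).2
        rcases lt_or_gt_of_ne (fun h => hij (Fin.ext h) : (i : ℕ) ≠ (j : ℕ)) with h | h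
        · exact hsep i j (hgap _ _ hPi hPj h)
        · rw [dist_comm]; exact hsep j i (hgap _ _ hPj hPi h)
    have h2 : ((T.card : ℝ≥0∞) * volume B).toReal ≤ ((2 : ℝ≥0∞) ^ d).toReal :=
      ENNReal.toReal_mono (by simp) key
    rw [ENNReal.toReal_mul, ENNReal.toReal_natCast] at h2
    simp only [ENNReal.toReal_pow, ENNReal.toReal_ofNat] at h2
    rw [le_div_iff₀ hVpos]
    exact h2
  have heven := hparity (fun a => Even a) (by infer_instance)
    (by intro a b ha hb hab; simp only [Nat.even_iff] at ha hb; omega)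
  have hodd := hparity (fun a => ¬ Even a) (by infer_instance)
    (by intro a b ha hb hab; simp only [Nat.even_iff] at ha hb; omega)
  -- the range intersection is the image of S
  have himg : Set.range π ∩ unitCube z = π '' (S : Set (Fin (n + 1))) := by
    ext y
    simp only [Set.mem_inter_iff, Set.mem_range, Set.mem_image, Finset.coe_filter, hS,
      Finset.mem_univ, true_and, Set.mem_setOf_eq]
    constructor
    · rintro ⟨⟨i, rfl⟩, hy⟩
      exact ⟨i, hy, rfl⟩
    · rintro ⟨i, hi, rfl⟩
      exact ⟨⟨i, rfl⟩, hi⟩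
  have hncard : (Set.range π ∩ unitCube z).ncard ≤ S.card := by
    rw [himg]
    calc (π '' (S : Set (Fin (n + 1)))).ncard ≤ (S : Set (Fin (n + 1))).ncard :=
          Set.ncard_image_le (S : Set (Fin (n + 1))).toFinite
      _ = S.card := Set.ncard_coe_finset S
  have hsplit : S.card = (S.filter fun i => Even i.val).card
      + (S.filter fun i => ¬ Even i.val).card :=
    (Finset.card_filter_add_card_filter_not _).symm
  calc ((Set.range π ∩ unitCube z).ncard : ℝ) ≤ (S.card : ℝ) := by exact_mod_cast hncard
    _ = ((S.filter fun i => Even i.val).card : ℝ)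
        + ((S.filter fun i => ¬ Even i.val).card : ℝ) := by exact_mod_cast hsplit
    _ ≤ 2 ^ d / (volume B).toReal + 2 ^ d / (volume B).toReal := add_le_add heven hodd
    _ = 2 ^ (d + 1) / (volume B).toReal := by
        rw [← add_div]
        ring_nf
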